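/- (Corollary 19 of the paper) If P ⊆ 2^ω is a set of infinite binary strings such that both P and its complement 2^ω \ P are dense in the Cantor space, then there is no propositional L_{ω1ω}-formula φ with s(φ) < ω² such that for every t ∈ 2^ω, t satisfies φ if and only if t ∈ P. -/

import Mathlib

/-- Propositional `L_{ω₁ω}`-formulas over propositional symbols `p i`, `i : ℕ`,
in negation normal form. -/
inductive PFml : Type
  | pos : ℕ → PFml
  | neg : ℕ → PFml
  | and : PFml → PFml → PFml
  | or : PFml → PFml → PFml
  | iand : (ℕ → PFml) → PFml
  | ior : (ℕ → PFml) → PFml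

/-- Satisfaction of a propositional formula by an infinite binary string. -/
def PSat (t : ℕ → Bool) : PFml → Prop
  | .pos i => t i = true
  | .neg i => t i = false
  | .and φ ψ => PSat t φ ∧ PSat t ψ
  | .or φ ψ => PSat t φ ∨ PSat t ψ
  | .iand f => ∀ i : ℕ, PSat t (f i)
  | .ior f => ∃ i : ℕ, PSat t (f i)

namespace Ordinal

universe u

/-- Natural (Hessenberg) addition of ordinals, as defined in the older Mathlib
(removed from the current one). -/
noncomputable def nadd (a b : Ordinal.{u}) : Ordinal.{u} :=
  max (⨆ x : Set.Iio a, Order.succ (nadd x.1 b)) (⨆ x : Set.Iio b, Order.succ (nadd a x.1))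
termination_by (a, b)
decreasing_by
  all_goals rcases x with ⟨x, hx⟩
  · exact Prod.Lex.left _ _ hx
  · exact Prod.Lex.right _ hx

end Ordinal

namespace Ordinal

theorem nadd_lt_nadd_of_lt_left {x a b : Ordinal} (h : x < a) : nadd x b < nadd a b := by
  conv_rhs => rw [nadd]
  calc nadd x b < Order.succ (nadd x b) := Order.lt_succ _
    _ ≤ ⨆ y : Set.Iio a, Order.succ (nadd y.1 b) :=
      Ordinal.le_iSup (fun y : Set.Iio a => Order.succ (nadd y.1 b)) ⟨x, h⟩
    _ ≤ _ := le_max_left _ _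

theorem nadd_lt_nadd_of_lt_right {x a b : Ordinal} (h : x < b) : nadd a x < nadd a b := by
  conv_rhs => rw [nadd]
  calc nadd a x < Order.succ (nadd a x) := Order.lt_succ _
    _ ≤ ⨆ y : Set.Iio b, Order.succ (nadd a y.1) :=
      Ordinal.le_iSup (fun y : Set.Iio b => Order.succ (nadd a y.1)) ⟨x, h⟩
    _ ≤ _ := le_max_right _ _

theorem le_self_nadd {a b : Ordinal} : a ≤ nadd a b :=
  StrictMono.le_apply (f := fun x => nadd x b) (fun _ _ h => nadd_lt_nadd_of_lt_left h)

theorem le_nadd_self {a b : Ordinal} : a ≤ nadd b a :=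
  StrictMono.le_apply (f := fun x => nadd b x) (fun _ _ h => nadd_lt_nadd_of_lt_right h)

theorem le_nadd_right {a b c : Ordinal} (h : a ≤ b) : a ≤ nadd b c :=
  h.trans le_self_nadd

theorem add_le_nadd (a b : Ordinal) : a + b ≤ nadd a b := by
  induction b using WellFoundedLT.induction with
  | _ b ih =>
    rcases eq_or_ne b 0 with rfl | hb
    · simpa using (le_self_nadd : a ≤ nadd a 0)
    · refine le_of_forall_lt fun x hx => ?_
      obtain ⟨d, hd, hxd⟩ := (lt_add_iff hb).1 hx
      exact lt_of_le_of_lt (hxd.trans (ih d hd)) (nadd_lt_nadd_of_lt_right hd)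

end Ordinal

/-- Finite partial natural (Hessenberg) sums. -/
noncomputable def natSumPrefix (γ : ℕ → Ordinal) : ℕ → Ordinal
  | 0 => 0
  | n + 1 => Ordinal.nadd (natSumPrefix γ n) (γ n)

/-- The infinite natural sum. -/
noncomputable def inatSum (γ : ℕ → Ordinal) : Ordinal := ⨆ n : ℕ, natSumPrefix γ n


noncomputable def psize : PFml → Ordinal
  | .pos _ => 1
  | .neg _ => 1
  | .and φ ψ => Ordinal.nadd (psize φ) (psize ψ)
  | .or φ ψ => Ordinal.nadd (psize φ) (psize ψ)
  | .iand f => inatSum fun i => psize (f i)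
  | .ior f => inatSum fun i => psize (f i)

lemma natSumPrefix_succ (γ : ℕ → Ordinal) (n : ℕ) :
    natSumPrefix γ (n + 1) = Ordinal.nadd (natSumPrefix γ n) (γ n) := rfl

lemma natSumPrefix_mono (γ : ℕ → Ordinal) : Monotone (natSumPrefix γ) := by
  apply monotone_nat_of_le_succ
  intro n
  rw [natSumPrefix_succ]
  exact Ordinal.le_self_nadd

lemma natSumPrefix_le_inatSum (γ : ℕ → Ordinal) (n : ℕ) : natSumPrefix γ n ≤ inatSum γ :=
  Ordinal.le_iSup (natSumPrefix γ) n

lemma le_inatSum (γ : ℕ → Ordinal) (i : ℕ) : γ i ≤ inatSum γ := by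
  refine le_trans ?_ (natSumPrefix_le_inatSum γ (i + 1))
  rw [natSumPrefix_succ]
  exact Ordinal.le_nadd_self

lemma one_le_psize (φ : PFml) : 1 ≤ psize φ := by
  induction φ with
  | pos n => exact le_rfl
  | neg n => exact le_rfl
  | and φ ψ ih1 ih2 => simpa only [psize] using Ordinal.le_nadd_right ih1
  | or φ ψ ih1 ih2 => simpa only [psize] using Ordinal.le_nadd_right ih1
  | iand f ihf => simpa only [psize] using le_trans (ihf 0) (le_inatSum (fun i => psize (f i)) 0)
  | ior f ihf => simpa only [psize] using le_trans (ihf 0) (le_inatSum (fun i => psize (f i)) 0)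

lemma nat_le_natSumPrefix (γ : ℕ → Ordinal) (h : ∀ i, 1 ≤ γ i) (n : ℕ) :
    (n : Ordinal) ≤ natSumPrefix γ n := by
  induction n with
  | zero => simp
  | succ n ihn =>
    have h1 : ((n : Ordinal) + 1) ≤ Ordinal.nadd (natSumPrefix γ n) (γ n) :=
      le_trans (add_le_add ihn (h n)) (Ordinal.add_le_nadd _ _)
    rw [natSumPrefix_succ]
    push_cast
    exact h1

lemma omega0_le_inatSum (γ : ℕ → Ordinal) (h : ∀ i, 1 ≤ γ i) :
    Ordinal.omega0 ≤ inatSum γ :=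
  Ordinal.omega0_le.2 fun n => (nat_le_natSumPrefix γ h n).trans (natSumPrefix_le_inatSum γ n)

/-- Formulas of finite size are determined by finitely many coordinates. -/
lemma finitely_determined (φ : PFml) : psize φ < Ordinal.omega0 →
    ∃ K : ℕ, ∀ t t' : ℕ → Bool, (∀ i < K, t i = t' i) → (PSat t φ ↔ PSat t' φ) := by
  induction φ with
  | pos n =>
    intro _
    exact ⟨n + 1, fun t t' h => by simp only [PSat]; rw [h n (by omega)]⟩
  | neg n =>
    intro _
    exact ⟨n + 1, fun t t' h => by simp only [PSat]; rw [h n (by omega)]⟩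
  | and φ ψ ih1 ih2 =>
    intro h
    simp only [psize] at h
    obtain ⟨K1, hK1⟩ := ih1 (lt_of_le_of_lt Ordinal.le_self_nadd h)
    obtain ⟨K2, hK2⟩ := ih2 (lt_of_le_of_lt Ordinal.le_nadd_self h)
    refine ⟨max K1 K2, fun t t' ha => ?_⟩
    simp only [PSat]
    exact and_congr (hK1 t t' fun i hi => ha i (lt_of_lt_of_le hi (le_max_left _ _)))
      (hK2 t t' fun i hi => ha i (lt_of_lt_of_le hi (le_max_right _ _)))
  | or φ ψ ih1 ih2 =>
    intro h
    simp only [psize] at h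
    obtain ⟨K1, hK1⟩ := ih1 (lt_of_le_of_lt Ordinal.le_self_nadd h)
    obtain ⟨K2, hK2⟩ := ih2 (lt_of_le_of_lt Ordinal.le_nadd_self h)
    refine ⟨max K1 K2, fun t t' ha => ?_⟩
    simp only [PSat]
    exact or_congr (hK1 t t' fun i hi => ha i (lt_of_lt_of_le hi (le_max_left _ _)))
      (hK2 t t' fun i hi => ha i (lt_of_lt_of_le hi (le_max_right _ _)))
  | iand f ihf =>
    intro h
    simp only [psize] at h
    exact absurd h (not_lt.2 (omega0_le_inatSum _ fun i => one_le_psize (f i)))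
  | ior f ihf =>
    intro h
    simp only [psize] at h
    exact absurd h (not_lt.2 (omega0_le_inatSum _ fun i => one_le_psize (f i)))

/-- If an infinite natural sum of sizes is `< ω²`, then all but finitely many terms
are finite. -/
lemma eventually_finite_of_inatSum_lt (γ : ℕ → Ordinal) (h1 : ∀ i, 1 ≤ γ i)
    (h : inatSum γ < Ordinal.omega0 * Ordinal.omega0) :
    ∃ m : ℕ, ∀ i, m ≤ i → γ i < Ordinal.omega0 := by
  by_contra hcon
  push_neg at hcon
  have key : ∀ kk : ℕ, ∃ n, Ordinal.omega0 * kk ≤ natSumPrefix γ n := by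
    intro kk
    induction kk with
    | zero => exact ⟨0, by simp⟩
    | succ kk ihk =>
      obtain ⟨n, hn⟩ := ihk
      obtain ⟨i, hni, hωi⟩ := hcon n
      refine ⟨i + 1, ?_⟩
      rw [natSumPrefix_succ]
      have : Ordinal.omega0 * ((kk : Ordinal) + 1) = Ordinal.omega0 * kk + Ordinal.omega0 := by
        rw [mul_add, mul_one]
      push_cast
      rw [this]
      exact le_trans (add_le_add (hn.trans (natSumPrefix_mono γ hni)) hωi)
        (Ordinal.add_le_nadd _ _)
  have hle : Ordinal.omega0 * Ordinal.omega0 ≤ inatSum γ := by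
    rw [Ordinal.mul_le_iff_of_isSuccLimit Ordinal.isSuccLimit_omega0]
    intro b hb
    obtain ⟨n, rfl⟩ := Ordinal.lt_omega0.1 hb
    obtain ⟨mm, hmm⟩ := key n
    exact hmm.trans (natSumPrefix_le_inatSum γ mm)
  exact absurd h (not_lt.2 hle)

/-- Main lemma: every formula of size `< ω²` is decided on a subcylinder of any
given basic cylinder. -/
lemma decide_main (φ : PFml) : psize φ < Ordinal.omega0 * Ordinal.omega0 →
    ∀ (k : ℕ) (s : ℕ → Bool), ∃ (k' : ℕ) (s' : ℕ → Bool), k ≤ k' ∧ (∀ i < k, s' i = s i) ∧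
      ((∀ t : ℕ → Bool, (∀ i < k', t i = s' i) → PSat t φ) ∨
       (∀ t : ℕ → Bool, (∀ i < k', t i = s' i) → ¬ PSat t φ)) := by
  induction φ with
  | pos n =>
    intro _ k s
    by_cases hn : n < k
    · refine ⟨k, s, le_rfl, fun _ _ => rfl, ?_⟩
      cases hs : s n with
      | false =>
        right; intro t ht
        simp only [PSat]
        rw [ht n hn, hs]; simp
      | true =>
        left; intro t ht
        show t n = true
        rw [ht n hn, hs]
    · refine ⟨max k (n + 1), Function.update s n true, le_max_left _ _, ?_, ?_⟩
      · intro i hi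
        exact Function.update_of_ne (by omega) _ _
      · left; intro t ht
        show t n = true
        rw [ht n (lt_of_lt_of_le (by omega) (le_max_right _ _)), Function.update_self]
  | neg n =>
    intro _ k s
    by_cases hn : n < k
    · refine ⟨k, s, le_rfl, fun _ _ => rfl, ?_⟩
      cases hs : s n with
      | true =>
        right; intro t ht
        simp only [PSat]
        rw [ht n hn, hs]; simp
      | false =>
        left; intro t ht
        show t n = false
        rw [ht n hn, hs]
    · refine ⟨max k (n + 1), Function.update s n false, le_max_left _ _, ?_, ?_⟩
      · intro i hi
        exact Function.update_of_ne (by omega) _ _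
      · left; intro t ht
        show t n = false
        rw [ht n (lt_of_lt_of_le (by omega) (le_max_right _ _)), Function.update_self]
  | and φ ψ ihφ ihψ =>
    intro hs k s
    simp only [psize] at hs
    obtain ⟨k1, s1, hk1, ha1, hd1⟩ := ihφ (lt_of_le_of_lt Ordinal.le_self_nadd hs) k s
    rcases hd1 with h1 | h1
    · obtain ⟨k2, s2, hk2, ha2, hd2⟩ := ihψ (lt_of_le_of_lt Ordinal.le_nadd_self hs) k1 s1
      have ha02 : ∀ i < k, s2 i = s i :=
        fun i hi => (ha2 i (lt_of_lt_of_le hi hk1)).trans (ha1 i hi)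
      rcases hd2 with h2 | h2
      · refine ⟨k2, s2, hk1.trans hk2, ha02, Or.inl fun t ht => ?_⟩
        exact ⟨h1 t (fun i hi => (ht i (lt_of_lt_of_le hi hk2)).trans (ha2 i hi)), h2 t ht⟩
      · exact ⟨k2, s2, hk1.trans hk2, ha02, Or.inr fun t ht hsat => h2 t ht hsat.2⟩
    · exact ⟨k1, s1, hk1, ha1, Or.inr fun t ht hsat => h1 t ht hsat.1⟩
  | or φ ψ ihφ ihψ =>
    intro hs k s
    simp only [psize] at hs
    obtain ⟨k1, s1, hk1, ha1, hd1⟩ := ihφ (lt_of_le_of_lt Ordinal.le_self_nadd hs) k s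
    rcases hd1 with h1 | h1
    · exact ⟨k1, s1, hk1, ha1, Or.inl fun t ht => Or.inl (h1 t ht)⟩
    · obtain ⟨k2, s2, hk2, ha2, hd2⟩ := ihψ (lt_of_le_of_lt Ordinal.le_nadd_self hs) k1 s1
      have ha02 : ∀ i < k, s2 i = s i :=
        fun i hi => (ha2 i (lt_of_lt_of_le hi hk1)).trans (ha1 i hi)
      rcases hd2 with h2 | h2
      · exact ⟨k2, s2, hk1.trans hk2, ha02, Or.inl fun t ht => Or.inr (h2 t ht)⟩
      · refine ⟨k2, s2, hk1.trans hk2, ha02, Or.inr fun t ht hsat => ?_⟩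
        rcases hsat with hl | hr
        · exact h1 t (fun i hi => (ht i (lt_of_lt_of_le hi hk2)).trans (ha2 i hi)) hl
        · exact h2 t ht hr
  | iand f ih =>
    intro hs k s
    simp only [psize] at hs
    obtain ⟨m, hmfin⟩ := eventually_finite_of_inatSum_lt _ (fun i => one_le_psize (f i)) hs
    by_cases hA : ∃ k' : ℕ, k ≤ k' ∧ ∃ s' : ℕ → Bool, (∀ i < k, s' i = s i) ∧
        ∃ j, ∀ t : ℕ → Bool, (∀ i < k', t i = s' i) → ¬ PSat t (f j)
    · obtain ⟨k', hk', s', ha', j, hj⟩ := hA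
      exact ⟨k', s', hk', ha', Or.inr fun t ht hsat => hj t ht (hsat j)⟩
    · push_neg at hA
      have chain : ∀ j : ℕ, ∃ (k' : ℕ) (s' : ℕ → Bool), k ≤ k' ∧ (∀ i < k, s' i = s i) ∧
          ∀ i < j, ∀ t : ℕ → Bool, (∀ l < k', t l = s' l) → PSat t (f i) := by
        intro j
        induction j with
        | zero => exact ⟨k, s, le_rfl, fun _ _ => rfl, fun i hi => absurd hi (by omega)⟩
        | succ j ihj =>
          obtain ⟨k1, s1, hk1, ha1, hpos⟩ := ihj
          have hfj : psize (f j) < Ordinal.omega0 * Ordinal.omega0 :=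
            lt_of_le_of_lt (le_inatSum (fun i => psize (f i)) j) hs
          obtain ⟨k2, s2, hk2, ha2, hd⟩ := ih j hfj k1 s1
          have hk02 : k ≤ k2 := hk1.trans hk2
          have ha02 : ∀ i < k, s2 i = s i :=
            fun i hi => (ha2 i (lt_of_lt_of_le hi hk1)).trans (ha1 i hi)
          rcases hd with hpos2 | hneg2
          · refine ⟨k2, s2, hk02, ha02, ?_⟩
            intro i hi t ht
            rcases Nat.lt_succ_iff_lt_or_eq.1 hi with hi' | rfl
            · exact hpos i hi' t (fun l hl => (ht l (lt_of_lt_of_le hl hk2)).trans (ha2 l hl))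
            · exact hpos2 t ht
          · obtain ⟨t, htc, htsat⟩ := hA k2 hk02 s2 ha02 j
            exact absurd htsat (hneg2 t htc)
      obtain ⟨k3, s3, hk3, ha3, hall⟩ := chain m
      refine ⟨k3, s3, hk3, ha3, Or.inl ?_⟩
      intro t ht i
      by_cases him : i < m
      · exact hall i him t ht
      · obtain ⟨K, hK⟩ := finitely_determined (f i) (hmfin i (not_lt.1 him))
        by_contra hnot
        obtain ⟨t', ht'c, ht'sat⟩ := hA (max k3 K) (hk3.trans (le_max_left _ _)) t
          (fun l hl => (ht l (lt_of_lt_of_le hl hk3)).trans (ha3 l hl)) i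
        exact hnot ((hK t' t
          (fun l hl => ht'c l (lt_of_lt_of_le hl (le_max_right _ _)))).1 ht'sat)
  | ior f ih =>
    intro hs k s
    simp only [psize] at hs
    obtain ⟨m, hmfin⟩ := eventually_finite_of_inatSum_lt _ (fun i => one_le_psize (f i)) hs
    by_cases hA : ∃ k' : ℕ, k ≤ k' ∧ ∃ s' : ℕ → Bool, (∀ i < k, s' i = s i) ∧
        ∃ j, ∀ t : ℕ → Bool, (∀ i < k', t i = s' i) → PSat t (f j)
    · obtain ⟨k', hk', s', ha', j, hj⟩ := hA
      exact ⟨k', s', hk', ha', Or.inl fun t ht => ⟨j, hj t ht⟩⟩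
    · push_neg at hA
      have chain : ∀ j : ℕ, ∃ (k' : ℕ) (s' : ℕ → Bool), k ≤ k' ∧ (∀ i < k, s' i = s i) ∧
          ∀ i < j, ∀ t : ℕ → Bool, (∀ l < k', t l = s' l) → ¬ PSat t (f i) := by
        intro j
        induction j with
        | zero => exact ⟨k, s, le_rfl, fun _ _ => rfl, fun i hi => absurd hi (by omega)⟩
        | succ j ihj =>
          obtain ⟨k1, s1, hk1, ha1, hneg⟩ := ihj
          have hfj : psize (f j) < Ordinal.omega0 * Ordinal.omega0 :=
            lt_of_le_of_lt (le_inatSum (fun i => psize (f i)) j) hs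
          obtain ⟨k2, s2, hk2, ha2, hd⟩ := ih j hfj k1 s1
          have hk02 : k ≤ k2 := hk1.trans hk2
          have ha02 : ∀ i < k, s2 i = s i :=
            fun i hi => (ha2 i (lt_of_lt_of_le hi hk1)).trans (ha1 i hi)
          rcases hd with hpos2 | hneg2
          · obtain ⟨t, htc, htsat⟩ := hA k2 hk02 s2 ha02 j
            exact absurd (hpos2 t htc) htsat
          · refine ⟨k2, s2, hk02, ha02, ?_⟩
            intro i hi t ht
            rcases Nat.lt_succ_iff_lt_or_eq.1 hi with hi' | rfl
            · exact hneg i hi' t (fun l hl => (ht l (lt_of_lt_of_le hl hk2)).trans (ha2 l hl))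
            · exact hneg2 t ht
      obtain ⟨k3, s3, hk3, ha3, hall⟩ := chain m
      refine ⟨k3, s3, hk3, ha3, Or.inr ?_⟩
      intro t ht hsat
      obtain ⟨i, hi⟩ := hsat
      by_cases him : i < m
      · exact hall i him t ht hi
      · obtain ⟨K, hK⟩ := finitely_determined (f i) (hmfin i (not_lt.1 him))
        obtain ⟨t', ht'c, ht'sat⟩ := hA (max k3 K) (hk3.trans (le_max_left _ _)) t
          (fun l hl => (ht l (lt_of_lt_of_le hl hk3)).trans (ha3 l hl)) i
        exact ht'sat ((hK t t'
          (fun l hl => (ht'c l (lt_of_lt_of_le hl (le_max_right _ _))).symm)).1 hi)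

/-- A set of strings which is dense with dense complement is not definable by a
propositional `L_{ω₁ω}`-formula of size less than `ω²`. -/
theorem not_definable_of_dense_compl_dense (P : Set (ℕ → Bool))
    (hP : Dense P) (hPc : Dense Pᶜ) :
    ¬ ∃ φ : PFml, psize φ < Ordinal.omega0 * Ordinal.omega0 ∧
      ∀ t : ℕ → Bool, PSat t φ ↔ t ∈ P := by
  rintro ⟨φ, hsize, hdef⟩
  obtain ⟨k, s, -, -, hd⟩ := decide_main φ hsize 0 (fun _ => false)
  have hopen : IsOpen {t : ℕ → Bool | ∀ i < k, t i = s i} := by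
    have heq : {t : ℕ → Bool | ∀ i < k, t i = s i}
        = ⋂ i ∈ Finset.range k, (fun t : ℕ → Bool => t i) ⁻¹' {s i} := by
      ext t
      simp [Finset.mem_range]
    rw [heq]
    exact isOpen_biInter_finset fun i _ =>
      (continuous_apply i).isOpen_preimage _ (isOpen_discrete _)
  have hne : {t : ℕ → Bool | ∀ i < k, t i = s i}.Nonempty := ⟨s, fun _ _ => rfl⟩
  rcases hd with h | h
  · obtain ⟨t, htP, htc⟩ := hPc.exists_mem_open hopen hne
    exact htP ((hdef t).1 (h t htc))
  · obtain ⟨t, htP, htc⟩ := hP.exists_mem_open hopen hne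
    exact h t htc ((hdef t).2 htP)
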